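/- Let E be a standard Borel space and let κ₀, …, κ_{n−1} be Markov (probability) kernels from E to E, modeling a discrete-time Markov chain. Given a bounded measurable terminal weight h_n : E → ℝ with h_n(x) > 0 for all x, define backward h_t(x) = ∫ h_{t+1}(x') κ_t(x, dx') for t = n−1, …, 0, and assume 0 < h_t(x) < ∞ for all x and t. Define the h-transformed kernels κ*_t(x, ·) := (κ_t(x, ·)).withDensity(x' ↦ h_{t+1}(x')/h_t(x)). Fix x₀ ∈ E and let P (resp. Q*) denote the law on E^{n} of the full trajectory (X₁, …, X_n) of the chain with kernels κ₀, …, κ_{n−1} (resp. κ*₀, …, κ*_{n−1}) started at x₀, constructed as the iterated product of the kernels. Then Q* = P.withDensity((x₁, …, x_n) ↦ h_n(x_n)/h_0(x₀)); in particular the Radon–Nikodym density of the controlled path measure with respect to the uncontrolled path measure is the telescoping product ∏_{t=0}^{n−1} h_{t+1}(x_{t+1})/h_t(x_t) = h_n(x_n)/h_0(x₀). -/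

import Mathlib

open MeasureTheory ProbabilityTheory
open scoped ENNReal

/-- The last state of a finite trajectory `(x₁, …, x_n)`, with the convention that the
empty trajectory has last state the initial point `x₀`. -/
def lastState {E : Type*} (x₀ : E) : ∀ {n : ℕ}, (Fin n → E) → E
  | 0, _ => x₀
  | (_ + 1), p => p (Fin.last _)

/-- The law on `E^n` of the full trajectory `(X₁, …, X_n)` of a (time-inhomogeneous)
Markov chain with transition (sub-)measures `K t`, started at `x₀`, constructed as the
iterated product of the transitions. -/
noncomputable def pathLaw {E : Type*} [MeasurableSpace E]
    (K : ℕ → E → Measure E) (x₀ : E) : (n : ℕ) → Measure (Fin n → E)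
  | 0 => Measure.dirac (fun i => i.elim0)
  | (n + 1) => (pathLaw K x₀ n).bind
      (fun p => (K n (lastState x₀ p)).map (Fin.snoc p))

section AuxLemmas

variable {E α β : Type*} [MeasurableSpace E] [MeasurableSpace α] [MeasurableSpace β]

lemma measurable_lastState (x₀ : E) : ∀ {m : ℕ}, Measurable (lastState x₀ : (Fin m → E) → E)
  | 0 => measurable_const
  | (_ + 1) => measurable_pi_apply _

lemma measurable_snoc (m : ℕ) :
    Measurable (fun q : (Fin m → E) × E => (Fin.snoc q.1 q.2 : Fin (m+1) → E)) := by
  apply measurable_pi_lambda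
  intro i
  refine Fin.lastCases ?_ ?_ i
  · simpa [Fin.snoc_last] using measurable_snd
  · intro j
    simpa [Fin.snoc_castSucc] using (measurable_fst.eval (a := j) :
      Measurable fun c : (Fin m → E) × E => c.1 j)

lemma measurable_step (η : Kernel E E) [IsSFiniteKernel η] (x₀ : E) (m : ℕ) :
    Measurable (fun p : Fin m → E =>
      (η (lastState x₀ p)).map (fun y : E => (Fin.snoc p y : Fin (m+1) → E))) := by
  apply Measure.measurable_of_measurable_coe
  intro s hs
  have hsnoc : ∀ p : Fin m → E, Measurable (fun y : E => (Fin.snoc p y : Fin (m+1) → E)) :=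
    fun p => (measurable_snoc m).comp measurable_prodMk_left
  have key : ∀ p : Fin m → E, (η (lastState x₀ p)).map (fun y : E => Fin.snoc p y) s
      = (η.comap (lastState x₀) (measurable_lastState x₀)) p
          (Prod.mk p ⁻¹' ((fun q : (Fin m → E) × E => (Fin.snoc q.1 q.2 : Fin (m+1) → E)) ⁻¹' s)) := by
    intro p
    rw [Measure.map_apply (hsnoc p) hs, Kernel.comap_apply]
    rfl
  simp_rw [key]
  exact Kernel.measurable_kernel_prodMk_left ((measurable_snoc m) hs)

lemma bind_withDensity (μ : Measure α) (g : α → ℝ≥0∞) (hg : Measurable g)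
    (F : α → Measure β) (hF : Measurable F) :
    (μ.withDensity g).bind F = μ.bind (fun a => g a • F a) := by
  have hF' : Measurable (fun a => g a • F a) := by
    apply Measure.measurable_of_measurable_coe
    intro s hs
    simp_rw [Measure.smul_apply, smul_eq_mul]
    exact hg.mul ((Measure.measurable_coe hs).comp hF)
  ext s hs
  rw [Measure.bind_apply hs hF.aemeasurable, Measure.bind_apply hs hF'.aemeasurable]
  rw [show (fun a => F a s) = ((fun ν : Measure β => ν s) ∘ F) from rfl,
    lintegral_withDensity_eq_lintegral_mul μ hg ((Measure.measurable_coe hs).comp hF)]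
  simp only [Pi.mul_apply, Measure.smul_apply, smul_eq_mul, Function.comp_apply]

lemma withDensity_bind (μ : Measure α) (F : α → Measure β) (hF : Measurable F)
    (w : β → ℝ≥0∞) (hw : Measurable w) :
    (μ.bind F).withDensity w = μ.bind (fun a => (F a).withDensity w) := by
  have hF' : Measurable fun a => (F a).withDensity w := by
    apply Measure.measurable_of_measurable_coe
    intro s hs
    simp_rw [withDensity_apply _ hs, ← lintegral_indicator hs]
    exact (Measure.measurable_lintegral (hw.indicator hs)).comp hF
  ext s hs
  rw [withDensity_apply _ hs, Measure.bind_apply hs hF'.aemeasurable,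
    ← lintegral_indicator hs,
    Measure.lintegral_bind hF.aemeasurable (hw.indicator hs).aemeasurable]
  simp_rw [lintegral_indicator hs, withDensity_apply _ hs]

lemma withDensity_map' (μ : Measure α) (f : α → β) (hf : Measurable f)
    (w : β → ℝ≥0∞) (hw : Measurable w) :
    (μ.map f).withDensity w = (μ.withDensity (w ∘ f)).map f := by
  ext s hs
  rw [withDensity_apply _ hs, Measure.map_apply hf hs, withDensity_apply _ (hf hs),
    setLIntegral_map hs hw hf]
  rfl

lemma h_transform_aux (n : ℕ) (κ : ℕ → Kernel E E) [∀ t, IsMarkovKernel (κ t)]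
    (h : ℕ → E → ℝ)
    (hm : ∀ t ≤ n, Measurable (h t))
    (hpos : ∀ t ≤ n, ∀ x, 0 < h t x)
    (x₀ : E) :
    ∀ m, m ≤ n →
    pathLaw (fun t x => (κ t x).withDensity
        (fun x' => ENNReal.ofReal (h (t + 1) x' / h t x))) x₀ m
      = (pathLaw (fun t x => κ t x) x₀ m).withDensity
          (fun p => ENNReal.ofReal (h m (lastState x₀ p) / h 0 x₀)) := by
  intro m
  induction m with
  | zero =>
    intro _
    have : (fun p : Fin 0 → E => ENNReal.ofReal (h 0 (lastState x₀ p) / h 0 x₀))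
        = fun _ => (1 : ℝ≥0∞) := by
      funext p
      show ENNReal.ofReal (h 0 x₀ / h 0 x₀) = 1
      rw [div_self (hpos 0 (Nat.zero_le n) x₀).ne', ENNReal.ofReal_one]
    rw [this]
    exact withDensity_one.symm
  | succ m ih =>
    intro hm1
    have hmn : m ≤ n := by omega
    have hm1n : m + 1 ≤ n := hm1
    -- measurability of relevant real functions
    have hhm : Measurable (h m) := hm m hmn
    have hhm1 : Measurable (h (m + 1)) := hm (m + 1) hm1n
    -- the h-transformed kernel at time m, as a kernel
    set D : E → E → ℝ≥0∞ := fun x y => ENNReal.ofReal (h (m + 1) y / h m x) with hD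
    have hDmeas : Measurable (Function.uncurry D) := by
      apply Measurable.ennreal_ofReal
      exact (hhm1.comp measurable_snd).div (hhm.comp measurable_fst)
    set η : Kernel E E := Kernel.withDensity (κ m) D with hη
    haveI : IsSFiniteKernel η :=
      Kernel.IsSFiniteKernel.withDensity (κ m) (fun _ _ => ENNReal.ofReal_ne_top)
    have hηapp : ∀ x, η x = (κ m x).withDensity (fun y => D x y) :=
      fun x => Kernel.withDensity_apply (κ m) hDmeas x
    -- density functions
    set g : (Fin m → E) → ℝ≥0∞ := fun p => ENNReal.ofReal (h m (lastState x₀ p) / h 0 x₀)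
      with hg
    have hgmeas : Measurable g :=
      ((hhm.comp (measurable_lastState x₀)).div_const _).ennreal_ofReal
    set w : (Fin (m + 1) → E) → ℝ≥0∞ :=
      fun q => ENNReal.ofReal (h (m + 1) (lastState x₀ q) / h 0 x₀) with hw
    have hwmeas : Measurable w :=
      ((hhm1.comp (measurable_lastState x₀)).div_const _).ennreal_ofReal
    have hFstar : Measurable (fun p : Fin m → E =>
        (η (lastState x₀ p)).map (fun y : E => (Fin.snoc p y : Fin (m+1) → E))) :=
      measurable_step η x₀ m
    have hF : Measurable (fun p : Fin m → E =>
        ((κ m) (lastState x₀ p)).map (fun y : E => (Fin.snoc p y : Fin (m+1) → E))) :=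
      measurable_step (κ m) x₀ m
    -- unfold one step of pathLaw on both sides
    show (pathLaw (fun t x => (κ t x).withDensity
          (fun x' => ENNReal.ofReal (h (t + 1) x' / h t x))) x₀ m).bind
        (fun p => (((κ m) (lastState x₀ p)).withDensity
          (fun x' => ENNReal.ofReal (h (m + 1) x' / h m (lastState x₀ p)))).map (Fin.snoc p))
      = ((pathLaw (fun t x => κ t x) x₀ m).bind
          (fun p => ((κ m) (lastState x₀ p)).map (Fin.snoc p))).withDensity w
    rw [ih hmn]
    have hstar_eq : (fun p : Fin m → E => (((κ m) (lastState x₀ p)).withDensity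
          (fun x' => ENNReal.ofReal (h (m + 1) x' / h m (lastState x₀ p)))).map (Fin.snoc p))
        = fun p => (η (lastState x₀ p)).map (fun y : E => (Fin.snoc p y : Fin (m+1) → E)) := by
      funext p
      rw [hηapp]
    rw [hstar_eq, bind_withDensity _ g hgmeas _ hFstar,
      withDensity_bind _ _ hF w hwmeas]
    congr 1
    funext p
    set x : E := lastState x₀ p
    have hsnocp : Measurable (fun y : E => (Fin.snoc p y : Fin (m+1) → E)) := by
      have := (measurable_snoc m (E := E)).comp (measurable_prodMk_left (x := p))
      simpa [Function.comp_def] using this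
    have hlast : ∀ y : E, lastState x₀ (Fin.snoc p y : Fin (m+1) → E) = y := by
      intro y
      show (Fin.snoc p y : Fin (m+1) → E) (Fin.last m) = y
      exact Fin.snoc_last _ _
    have hwcomp : (w ∘ fun y : E => (Fin.snoc p y : Fin (m+1) → E))
        = fun y => ENNReal.ofReal (h (m + 1) y / h 0 x₀) := by
      funext y
      simp only [Function.comp_apply, hw, hlast]
    calc g p • (η x).map (fun y : E => (Fin.snoc p y : Fin (m+1) → E))
        = ((g p • η x).map (fun y : E => (Fin.snoc p y : Fin (m+1) → E))) := by
          rw [Measure.map_smul]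
      _ = (((κ m x).withDensity (fun y => g p * D x y)).map
            (fun y : E => (Fin.snoc p y : Fin (m+1) → E))) := by
          rw [hηapp]
          congr 1
          rw [← withDensity_smul _ (by
            exact (hhm1.div_const _).ennreal_ofReal : Measurable fun y => D x y)]
          rfl
      _ = (((κ m x).withDensity
            (w ∘ fun y : E => (Fin.snoc p y : Fin (m+1) → E))).map
            (fun y : E => (Fin.snoc p y : Fin (m+1) → E))) := by
          rw [hwcomp]
          congr 1
          refine congrArg _ (funext fun y => ?_)
          have hx : 0 < h m x := hpos m hmn x
          have h0 : 0 < h 0 x₀ := hpos 0 (Nat.zero_le n) x₀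
          have hy : 0 < h (m + 1) y := hpos (m + 1) hm1n y
          show ENNReal.ofReal (h m x / h 0 x₀) * ENNReal.ofReal (h (m + 1) y / h m x)
            = ENNReal.ofReal (h (m + 1) y / h 0 x₀)
          rw [← ENNReal.ofReal_mul (div_nonneg hx.le h0.le)]
          congr 1
          field_simp
      _ = ((κ m x).map (fun y : E => (Fin.snoc p y : Fin (m+1) → E))).withDensity w := by
          rw [withDensity_map' _ _ hsnocp w hwmeas]

end AuxLemmas

/-- Discrete-time path-measure form of the Doob h-transform: the h-transformed path
measure equals the original path measure reweighted by the telescoping density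
`h n (x_n) / h 0 x₀`. -/
theorem h_transform_path_law {E : Type*} [MeasurableSpace E] [StandardBorelSpace E]
    (n : ℕ) (κ : ℕ → Kernel E E) [∀ t, IsMarkovKernel (κ t)]
    (h : ℕ → E → ℝ)
    (hmeas : Measurable (h n)) (hbdd : ∃ C, ∀ x, |h n x| ≤ C)
    (hposn : ∀ x, 0 < h n x)
    (hrec : ∀ t < n, ∀ x, h t x = ∫ x', h (t + 1) x' ∂(κ t x))
    (hpos : ∀ t ≤ n, ∀ x, 0 < h t x)
    (x₀ : E) :
    pathLaw (fun t x => (κ t x).withDensity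
        (fun x' => ENNReal.ofReal (h (t + 1) x' / h t x))) x₀ n
      = (pathLaw (fun t x => κ t x) x₀ n).withDensity
          (fun p => ENNReal.ofReal (h n (lastState x₀ p) / h 0 x₀)) := by
  have hm : ∀ t ≤ n, Measurable (h t) := by
    have key : ∀ k, ∀ t, t + k = n → Measurable (h t) := by
      intro k
      induction k with
      | zero =>
        intro t ht
        obtain rfl : t = n := by omega
        exact hmeas
      | succ k ih =>
        intro t ht
        have ht' : t < n := by omega
        have heq : h t = fun x => ∫ x', h (t + 1) x' ∂(κ t x) := funext (hrec t ht')
        rw [heq]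
        have hm1 : Measurable (h (t + 1)) := ih (t + 1) (by omega)
        exact (StronglyMeasurable.integral_kernel_prod_right' (κ := κ t)
          (f := fun q : E × E => h (t + 1) q.2)
          ((hm1.comp measurable_snd).stronglyMeasurable)).measurable
    intro t ht
    exact key (n - t) t (by omega)
  exact h_transform_aux n κ h hm hpos x₀ n le_rfl
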